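/- Under the heat-matrix assumptions with zero sources, for every k ≥ 1 and every index i there exist nonnegative weights w_1, …, w_N with Σ_j w_j = 1 such that CN_k(h)_i = Σ_j w_j u⁰_j; i.e., every iterated constant-neighbour value CN_1, CN_2, CN_3, … is a convex combination of the initial values (Theorem 2, constant-neighbour part). -/

import Mathlib

open Finset NormedSpace Asymptotics

/-- `aCoef M Q v i = Σ_{j≠i} M_ij v_j + Q_i`. -/
noncomputable def aCoef {N : ℕ} (M : Matrix (Fin N) (Fin N) ℝ) (Q : Fin N → ℝ)
    (v : Fin N → ℝ) (i : Fin N) : ℝ :=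
  (∑ j ∈ Finset.univ.erase i, M i j * v j) + Q i

/-- The constant-neighbour step `F_h`. -/
noncomputable def cnStep {N : ℕ} (M : Matrix (Fin N) (Fin N) ℝ) (Q u0 : Fin N → ℝ)
    (h : ℝ) (v : Fin N → ℝ) : Fin N → ℝ :=
  fun i => u0 i * Real.exp (M i i * h)
    + (aCoef M Q v i / (-(M i i))) * (1 - Real.exp (M i i * h))

/-- The `k`-stage constant-neighbour approximation `CN_k(h) = F_h^[k] u⁰`. -/
noncomputable def CN {N : ℕ} (M : Matrix (Fin N) (Fin N) ℝ) (Q u0 : Fin N → ℝ)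
    (k : ℕ) (h : ℝ) : Fin N → ℝ :=
  (cnStep M Q u0 h)^[k] u0

/-- The effective slope `s_i(v) = (a_i(v) − a_i(u⁰))/h`. -/
noncomputable def sCoef {N : ℕ} (M : Matrix (Fin N) (Fin N) ℝ) (Q u0 : Fin N → ℝ)
    (h : ℝ) (v : Fin N → ℝ) (i : Fin N) : ℝ :=
  (aCoef M Q v i - aCoef M Q u0 i) / h

/-- The linear-neighbour step `G_h`, with `τ_i = −1/M_ii`. -/
noncomputable def lnStep {N : ℕ} (M : Matrix (Fin N) (Fin N) ℝ) (Q u0 : Fin N → ℝ)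
    (h : ℝ) (v : Fin N → ℝ) : Fin N → ℝ :=
  fun i =>
    u0 i * Real.exp (M i i * h)
      + (aCoef M Q u0 i * (-(M i i)⁻¹) - sCoef M Q u0 h v i * (-(M i i)⁻¹) ^ 2)
          * (1 - Real.exp (M i i * h))
      + sCoef M Q u0 h v i * (-(M i i)⁻¹) * h

/-- The `k`-stage linear-neighbour approximation `LN_k(h) = G_h^[k−1] (CN_1(h))`, `k ≥ 2`. -/
noncomputable def LN {N : ℕ} (M : Matrix (Fin N) (Fin N) ℝ) (Q u0 : Fin N → ℝ)
    (k : ℕ) (h : ℝ) : Fin N → ℝ :=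
  (lnStep M Q u0 h)^[k - 1] (cnStep M Q u0 h u0)

/-- The exact solution `u_ex(h) = e^{hM} u⁰ + ∫₀^h e^{(h−s)M} Q ds`. -/
noncomputable def uex {N : ℕ} (M : Matrix (Fin N) (Fin N) ℝ) (Q u0 : Fin N → ℝ)
    (h : ℝ) : Fin N → ℝ :=
  (exp (h • M)).mulVec u0 + ∫ s in (0:ℝ)..h, (exp ((h - s) • M)).mulVec Q

/-- Theorem 2 (constant-neighbour part): under the heat-matrix assumptions with zero
sources, every iterated constant-neighbour value `CN_k(h)_i`, `k ≥ 1`, is a convex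
combination of the initial values. -/
theorem cn_iterates_convex_combination {N : ℕ} (hN : 1 ≤ N)
    (M : Matrix (Fin N) (Fin N) ℝ)
    (hoff : ∀ i j, j ≠ i → 0 ≤ M i j)
    (hrow : ∀ i, ∑ j, M i j = 0)
    (hdiag : ∀ i, M i i < 0)
    (u0 : Fin N → ℝ) (h : ℝ) (hh : 0 < h) (k : ℕ) (hk : 1 ≤ k) (i : Fin N) :
    ∃ w : Fin N → ℝ, (∀ j, 0 ≤ w j) ∧ (∑ j, w j) = 1 ∧
      CN M (0 : Fin N → ℝ) u0 k h i = ∑ j, w j * u0 j := by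

  clear hk
  induction k generalizing i with
  | zero =>
    refine ⟨fun l => if l = i then 1 else 0, fun l => by dsimp only; split <;> norm_num, ?_, ?_⟩
    · simp
    · simp [CN, Finset.sum_ite_eq']
  | succ k ih =>
    choose W hW0 hW1 hW2 using ih
    have hMi : (0:ℝ) < -(M i i) := by linarith [hdiag i]
    set E := Real.exp (M i i * h) with hEdef
    have hE0 : 0 < E := Real.exp_pos _
    have hE1 : E ≤ 1 := by
      apply le_of_lt
      apply Real.exp_lt_one_iff.mpr
      exact mul_neg_of_neg_of_pos (hdiag i) hh
    have herase : ∑ j ∈ Finset.univ.erase i, M i j = -(M i i) := by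
      have h0 := hrow i
      rw [← Finset.add_sum_erase _ _ (Finset.mem_univ i)] at h0
      linarith
    set β : Fin N → ℝ := fun j => M i j / (-(M i i)) with hβdef
    have hβ0 : ∀ j ∈ Finset.univ.erase i, 0 ≤ β j := by
      intro j hj
      exact div_nonneg (hoff i j (Finset.ne_of_mem_erase hj)) hMi.le
    have hβsum : ∑ j ∈ Finset.univ.erase i, β j = 1 := by
      rw [hβdef, ← Finset.sum_div, herase, div_self hMi.ne']
    refine ⟨fun l => (if l = i then 1 else 0) * E
        + (∑ j ∈ Finset.univ.erase i, β j * W j l) * (1 - E), ?_, ?_, ?_⟩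
    · intro l
      dsimp only
      have h1 : 0 ≤ (if l = i then (1:ℝ) else 0) * E := by
        apply mul_nonneg _ hE0.le; split <;> norm_num
      have h2 : 0 ≤ (∑ j ∈ Finset.univ.erase i, β j * W j l) * (1 - E) := by
        apply mul_nonneg _ (by linarith)
        exact Finset.sum_nonneg fun j hj => mul_nonneg (hβ0 j hj) (hW0 j l)
      linarith
    · rw [Finset.sum_add_distrib, ← Finset.sum_mul, ← Finset.sum_mul]
      rw [Finset.sum_ite_eq' Finset.univ i (fun _ => (1:ℝ))]
      have hswap : ∑ l, ∑ j ∈ Finset.univ.erase i, β j * W j l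
          = ∑ j ∈ Finset.univ.erase i, β j * ∑ l, W j l := by
        rw [Finset.sum_comm]
        exact Finset.sum_congr rfl fun j _ => by rw [Finset.mul_sum]
      rw [hswap]
      have : ∑ j ∈ Finset.univ.erase i, β j * ∑ l, W j l
          = ∑ j ∈ Finset.univ.erase i, β j :=
        Finset.sum_congr rfl fun j _ => by rw [hW1 j, mul_one]
      rw [this, hβsum]
      simp
    · have hiter : CN M (0 : Fin N → ℝ) u0 (k+1) h i
          = cnStep M (0 : Fin N → ℝ) u0 h (CN M (0 : Fin N → ℝ) u0 k h) i := by
        rw [CN, Function.iterate_succ_apply']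
        rfl
      rw [hiter]
      have hLHS : cnStep M (0 : Fin N → ℝ) u0 h (CN M (0 : Fin N → ℝ) u0 k h) i
          = u0 i * E + (∑ j ∈ Finset.univ.erase i,
              β j * ∑ l, W j l * u0 l) * (1 - E) := by
        rw [cnStep, aCoef]
        simp only [Pi.zero_apply, add_zero]
        congr 1
        congr 1
        rw [Finset.sum_div]
        exact Finset.sum_congr rfl fun j hj => by
          rw [hW2 j, hβdef, div_mul_eq_mul_div, mul_comm]
      rw [hLHS]
      have h1 : ∑ l, (if l = i then (1:ℝ) else 0) * E * u0 l = u0 i * E := by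
        rw [Finset.sum_eq_single i]
        · simp [mul_comm]
        · intro b _ hb; simp [hb]
        · simp
      have h2 : ∑ l, (∑ j ∈ Finset.univ.erase i, β j * W j l) * (1 - E) * u0 l
          = (∑ j ∈ Finset.univ.erase i, β j * ∑ l, W j l * u0 l) * (1 - E) := by
        calc ∑ l, (∑ j ∈ Finset.univ.erase i, β j * W j l) * (1 - E) * u0 l
            = ∑ l, ∑ j ∈ Finset.univ.erase i, β j * W j l * (1 - E) * u0 l := by
              refine Finset.sum_congr rfl fun l _ => ?_
              rw [Finset.sum_mul, Finset.sum_mul]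
          _ = ∑ j ∈ Finset.univ.erase i, ∑ l, β j * W j l * (1 - E) * u0 l :=
              Finset.sum_comm
          _ = ∑ j ∈ Finset.univ.erase i, β j * (∑ l, W j l * u0 l) * (1 - E) := by
              refine Finset.sum_congr rfl fun j _ => ?_
              rw [Finset.mul_sum, Finset.sum_mul]
              exact Finset.sum_congr rfl fun l _ => by ring
          _ = (∑ j ∈ Finset.univ.erase i, β j * ∑ l, W j l * u0 l) * (1 - E) := by
              rw [Finset.sum_mul]
      simp only [add_mul, Finset.sum_add_distrib]
      rw [h1, h2]
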